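/- Let A, B, C, D ∈ ℝ² with no three collinear. Let h be a conic through A, B, C, D with a center O and an axis with direction u ≠ 0, meaning B_h(u, u⊥) = 0 where u⊥ = (−u₂, u₁). Let M = O + s·u for some s ∈ ℝ and let ℓ = {M + t·u⊥ : t ∈ ℝ} be the line through M perpendicular to the axis, containing none of A, B, C, D. Suppose some conic G through A, B, C, D, given by a polynomial not proportional to that of h, meets ℓ in exactly two points P ≠ Q with M = (P + Q)/2. Then every conic through A, B, C, D meets ℓ either in the empty set, or exactly in {M}, or exactly in a pair of distinct points whose midpoint is M. -/

import Mathlib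

/-- A conic (possibly degenerate) in the affine plane `ℝ × ℝ`, given by the six
coefficients of a polynomial `a·x² + b·x·y + c·y² + d·x + e·y + g`. -/
structure Conic where
  a : ℝ
  b : ℝ
  c : ℝ
  d : ℝ
  e : ℝ
  g : ℝ

/-- Evaluation of the defining polynomial of a conic at a point of `ℝ × ℝ`. -/
def Conic.eval (f : Conic) (p : ℝ × ℝ) : ℝ :=
  f.a * p.1 ^ 2 + f.b * p.1 * p.2 + f.c * p.2 ^ 2 + f.d * p.1 + f.e * p.2 + f.g

namespace CerinAux

def vEval (w : Fin 6 → ℝ) (p : ℝ × ℝ) : ℝ :=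
  w 0 * p.1 ^ 2 + w 1 * p.1 * p.2 + w 2 * p.2 ^ 2 + w 3 * p.1 + w 4 * p.2 + w 5

def evalL (p : ℝ × ℝ) : (Fin 6 → ℝ) →ₗ[ℝ] ℝ where
  toFun w := vEval w p
  map_add' x y := by simp [vEval]; ring
  map_smul' c x := by simp [vEval]; ring

@[simp] lemma evalL_apply (p : ℝ × ℝ) (w : Fin 6 → ℝ) : evalL p w = vEval w p := rfl

def toVec (f : Conic) : Fin 6 → ℝ
  | 0 => f.a | 1 => f.b | 2 => f.c | 3 => f.d | 4 => f.e | 5 => f.g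

@[simp] lemma toVec_0 (f : Conic) : toVec f 0 = f.a := rfl
@[simp] lemma toVec_1 (f : Conic) : toVec f 1 = f.b := rfl
@[simp] lemma toVec_2 (f : Conic) : toVec f 2 = f.c := rfl
@[simp] lemma toVec_3 (f : Conic) : toVec f 3 = f.d := rfl
@[simp] lemma toVec_4 (f : Conic) : toVec f 4 = f.e := rfl
@[simp] lemma toVec_5 (f : Conic) : toVec f 5 = f.g := rfl

@[simp] lemma toVec_mk2 (f : Conic) (hlt : 2 < 6) : toVec f ⟨2, hlt⟩ = f.c := rfl
@[simp] lemma toVec_mk3 (f : Conic) (hlt : 3 < 6) : toVec f ⟨3, hlt⟩ = f.d := rfl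
@[simp] lemma toVec_mk4 (f : Conic) (hlt : 4 < 6) : toVec f ⟨4, hlt⟩ = f.e := rfl
@[simp] lemma toVec_mk5 (f : Conic) (hlt : 5 < 6) : toVec f ⟨5, hlt⟩ = f.g := rfl

lemma vEval_toVec (f : Conic) (p : ℝ × ℝ) : vEval (toVec f) p = f.eval p := rfl

@[simp] lemma vEval_add (w₁ w₂ : Fin 6 → ℝ) (p : ℝ × ℝ) :
    vEval (w₁ + w₂) p = vEval w₁ p + vEval w₂ p := by simp [vEval]; ring

@[simp] lemma vEval_smul (c : ℝ) (w : Fin 6 → ℝ) (p : ℝ × ℝ) :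
    vEval (c • w) p = c * vEval w p := by simp [vEval]; ring

def lineF (P Q p : ℝ × ℝ) : ℝ := (Q.2 - P.2) * (p.1 - P.1) - (Q.1 - P.1) * (p.2 - P.2)

@[simp] lemma lineF_left (P Q : ℝ × ℝ) : lineF P Q P = 0 := by simp [lineF]
@[simp] lemma lineF_right (P Q : ℝ × ℝ) : lineF P Q Q = 0 := by simp [lineF]; ring

/-- coefficient vector of the product of the two linear forms `lineF P Q` and `lineF R S` -/
def prodVec (P Q R S : ℝ × ℝ) : Fin 6 → ℝ
  | 0 => (Q.2 - P.2) * (S.2 - R.2)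
  | 1 => (Q.2 - P.2) * (-(S.1 - R.1)) + (S.2 - R.2) * (-(Q.1 - P.1))
  | 2 => (-(Q.1 - P.1)) * (-(S.1 - R.1))
  | 3 => (Q.2 - P.2) * ((S.1 - R.1) * R.2 - (S.2 - R.2) * R.1)
         + (S.2 - R.2) * ((Q.1 - P.1) * P.2 - (Q.2 - P.2) * P.1)
  | 4 => (-(Q.1 - P.1)) * ((S.1 - R.1) * R.2 - (S.2 - R.2) * R.1)
         + (-(S.1 - R.1)) * ((Q.1 - P.1) * P.2 - (Q.2 - P.2) * P.1)
  | 5 => ((Q.1 - P.1) * P.2 - (Q.2 - P.2) * P.1) * ((S.1 - R.1) * R.2 - (S.2 - R.2) * R.1)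

lemma vEval_prodVec (P Q R S p : ℝ × ℝ) :
    vEval (prodVec P Q R S) p = lineF P Q p * lineF R S p := by
  simp only [vEval, prodVec, lineF]; ring

lemma collinear_of_lineF (P Q R : ℝ × ℝ) (hz : lineF P Q R = 0) :
    Collinear ℝ ({P, Q, R} : Set (ℝ × ℝ)) := by
  rcases eq_or_ne Q P with hQP | hQP
  · apply (collinear_iff_of_mem (Set.mem_insert P {Q, R})).2
    refine ⟨R - P, fun p hp => ?_⟩
    simp only [Set.mem_insert_iff, Set.mem_singleton_iff] at hp
    rcases hp with rfl | rfl | rfl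
    · exact ⟨0, by simp⟩
    · exact ⟨0, by simp [hQP]⟩
    · refine ⟨1, ?_⟩
      show p = (1 : ℝ) • (p - P) + P
      simp
  · apply (collinear_iff_of_mem (Set.mem_insert P {Q, R})).2
    have hd : (Q.1 - P.1) ^ 2 + (Q.2 - P.2) ^ 2 ≠ 0 := by
      intro h0
      apply hQP
      have h1 : Q.1 - P.1 = 0 := by nlinarith [sq_nonneg (Q.1 - P.1), sq_nonneg (Q.2 - P.2)]
      have h2 : Q.2 - P.2 = 0 := by nlinarith [sq_nonneg (Q.1 - P.1), sq_nonneg (Q.2 - P.2)]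
      exact Prod.ext (by linarith) (by linarith)
    refine ⟨Q - P, fun p hp => ?_⟩
    simp only [Set.mem_insert_iff, Set.mem_singleton_iff] at hp
    rcases hp with rfl | rfl | rfl
    · exact ⟨0, by simp⟩
    · refine ⟨1, ?_⟩
      show p = (1 : ℝ) • (p - P) + P
      simp
    · refine ⟨((p.1 - P.1) * (Q.1 - P.1) + (p.2 - P.2) * (Q.2 - P.2)) /
        ((Q.1 - P.1) ^ 2 + (Q.2 - P.2) ^ 2), ?_⟩
      unfold lineF at hz
      show p = _ • (Q - P) + P
      have h1 : p.1 = (((p.1 - P.1) * (Q.1 - P.1) + (p.2 - P.2) * (Q.2 - P.2)) /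
          ((Q.1 - P.1) ^ 2 + (Q.2 - P.2) ^ 2)) * (Q.1 - P.1) + P.1 := by
        field_simp
        linear_combination (Q.2 - P.2) * hz
      have h2 : p.2 = (((p.1 - P.1) * (Q.1 - P.1) + (p.2 - P.2) * (Q.2 - P.2)) /
          ((Q.1 - P.1) ^ 2 + (Q.2 - P.2) ^ 2)) * (Q.2 - P.2) + P.2 := by
        field_simp
        linear_combination (-(Q.1 - P.1)) * hz
      apply Prod.ext
      · simpa using h1
      · simpa using h2

end CerinAux

/-- The defining polynomial is nonzero. -/
def Conic.Nonzero (f : Conic) : Prop :=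
  ¬ (f.a = 0 ∧ f.b = 0 ∧ f.c = 0 ∧ f.d = 0 ∧ f.e = 0 ∧ f.g = 0)

/-- The conic passes through the four points `A`, `B`, `C`, `D`. -/
def Conic.Through (f : Conic) (A B C D : ℝ × ℝ) : Prop :=
  f.eval A = 0 ∧ f.eval B = 0 ∧ f.eval C = 0 ∧ f.eval D = 0

/-- No three of the four points `A`, `B`, `C`, `D` are collinear. -/
def NoThreeCollinear (A B C D : ℝ × ℝ) : Prop :=
  ¬ Collinear ℝ ({A, B, C} : Set (ℝ × ℝ)) ∧ ¬ Collinear ℝ ({A, B, D} : Set (ℝ × ℝ)) ∧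
  ¬ Collinear ℝ ({A, C, D} : Set (ℝ × ℝ)) ∧ ¬ Collinear ℝ ({B, C, D} : Set (ℝ × ℝ))

/-- The line through `M` with direction `u`. -/
def parmLine (M u : ℝ × ℝ) : Set (ℝ × ℝ) :=
  {p | ∃ t : ℝ, p = M + t • u}

/-- The polynomial of `f` is proportional to that of `h`. -/
def Conic.PropTo (f h : Conic) : Prop :=
  ∃ k : ℝ, f.a = k * h.a ∧ f.b = k * h.b ∧ f.c = k * h.c ∧
    f.d = k * h.d ∧ f.e = k * h.e ∧ f.g = k * h.g

/-- The polar bilinear form of the quadratic part of `f`: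
`B_f(u, w) = a·u₁·w₁ + (b/2)·(u₁·w₂ + u₂·w₁) + c·u₂·w₂`. -/
noncomputable def Conic.polarForm (f : Conic) (u w : ℝ × ℝ) : ℝ :=
  f.a * u.1 * w.1 + (f.b / 2) * (u.1 * w.2 + u.2 * w.1) + f.c * u.2 * w.2

/-- `O` is a center of the conic `f`. -/
def Conic.IsCenter (f : Conic) (O : ℝ × ℝ) : Prop :=
  ∀ w : ℝ × ℝ, f.eval (O + w) = f.eval (O - w)


namespace CerinAux

def qf (f : Conic) (w : ℝ × ℝ) : ℝ := f.a * w.1 ^ 2 + f.b * w.1 * w.2 + f.c * w.2 ^ 2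

def lf (f : Conic) (M w : ℝ × ℝ) : ℝ :=
  2 * f.a * M.1 * w.1 + f.b * (M.1 * w.2 + M.2 * w.1) + 2 * f.c * M.2 * w.2 + f.d * w.1 + f.e * w.2

def mf (f : Conic) (u v : ℝ × ℝ) : ℝ :=
  2 * f.a * u.1 * v.1 + f.b * (u.1 * v.2 + u.2 * v.1) + 2 * f.c * u.2 * v.2

lemma eval_line (f : Conic) (M w : ℝ × ℝ) (t : ℝ) :
    f.eval (M + t • w) = qf f w * t ^ 2 + lf f M w * t + f.eval M := by
  simp only [Conic.eval, qf, lf, Prod.fst_add, Prod.snd_add, Prod.smul_fst, Prod.smul_snd,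
    smul_eq_mul]
  ring

lemma eval_plane (f : Conic) (M u v : ℝ × ℝ) (x y : ℝ) :
    f.eval (M + x • u + y • v) = qf f u * x ^ 2 + mf f u v * (x * y) + qf f v * y ^ 2 +
      lf f M u * x + lf f M v * y + f.eval M := by
  simp only [Conic.eval, qf, lf, mf, Prod.fst_add, Prod.snd_add, Prod.smul_fst, Prod.smul_snd,
    smul_eq_mul]
  ring

lemma pencil (A B C D : ℝ × ℝ)
    (hABC : ¬ Collinear ℝ ({A, B, C} : Set (ℝ × ℝ)))
    (hABD : ¬ Collinear ℝ ({A, B, D} : Set (ℝ × ℝ)))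
    (hACD : ¬ Collinear ℝ ({A, C, D} : Set (ℝ × ℝ)))
    (h G f : Conic) (hh0 : h.Nonzero) (hGh : ¬ G.PropTo h)
    (hh : h.Through A B C D) (hG : G.Through A B C D) (hf : f.Through A B C D) :
    ∃ lam mu : ℝ, toVec f = lam • toVec h + mu • toVec G := by
  classical
  have sub : ∀ {P Q R : ℝ × ℝ}, ¬ Collinear ℝ ({P, Q, R} : Set (ℝ × ℝ)) →
      ∀ P' Q' R' : ℝ × ℝ, (P = P' ∨ P = Q' ∨ P = R') → (Q = P' ∨ Q = Q' ∨ Q = R') →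
      (R = P' ∨ R = Q' ∨ R = R') → lineF P' Q' R' ≠ 0 := by
    intro P Q R hnc P' Q' R' h1 h2 h3 hz
    refine hnc ((collinear_of_lineF P' Q' R' hz).subset ?_)
    intro p hp
    simp only [Set.mem_insert_iff, Set.mem_singleton_iff] at hp ⊢
    rcases hp with rfl | rfl | rfl <;> tauto
  have hBCA : lineF B C A ≠ 0 := sub hABC B C A (by tauto) (by tauto) (by tauto)
  have hBDA : lineF B D A ≠ 0 := sub hABD B D A (by tauto) (by tauto) (by tauto)
  have hACB : lineF A C B ≠ 0 := sub hABC A C B (by tauto) (by tauto) (by tauto)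
  have hADB : lineF A D B ≠ 0 := sub hABD A D B (by tauto) (by tauto) (by tauto)
  have hABC' : lineF A B C ≠ 0 := sub hABC A B C (by tauto) (by tauto) (by tauto)
  have hADC : lineF A D C ≠ 0 := sub hACD A D C (by tauto) (by tauto) (by tauto)
  have hABD' : lineF A B D ≠ 0 := sub hABD A B D (by tauto) (by tauto) (by tauto)
  have hACD' : lineF A C D ≠ 0 := sub hACD A C D (by tauto) (by tauto) (by tauto)
  set pts : Fin 4 → ℝ × ℝ := ![A, B, C, D] with hpts
  set e : (Fin 6 → ℝ) →ₗ[ℝ] (Fin 4 → ℝ) := LinearMap.pi (fun i => evalL (pts i)) with he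
  have hsurj : Function.Surjective e := by
    intro y
    refine ⟨(y 0 / (lineF B C A * lineF B D A)) • prodVec B C B D +
        (y 1 / (lineF A C B * lineF A D B)) • prodVec A C A D +
        (y 2 / (lineF A B C * lineF A D C)) • prodVec A B A D +
        (y 3 / (lineF A B D * lineF A C D)) • prodVec A B A C, ?_⟩
    funext i
    fin_cases i <;>
      simp [he, hpts, vEval_prodVec] <;>
      field_simp
  have memker : ∀ c : Conic, c.Through A B C D → toVec c ∈ LinearMap.ker e := by
    intro c hc
    rw [LinearMap.mem_ker]
    funext i
    fin_cases i <;>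
      simp [he, hpts, vEval_toVec, hc.1, hc.2.1, hc.2.2.1, hc.2.2.2]
  have hker2 : Module.finrank ℝ (LinearMap.ker e) = 2 := by
    have h1 := LinearMap.finrank_range_add_finrank_ker e
    rw [LinearMap.range_eq_top.2 hsurj] at h1
    simp only [finrank_top] at h1
    simp only [Module.finrank_pi, Fintype.card_fin] at h1
    omega
  have hdep : ¬ LinearIndependent ℝ ![toVec f, toVec h, toVec G] := by
    intro hli
    have hle : Submodule.span ℝ (Set.range ![toVec f, toVec h, toVec G]) ≤ LinearMap.ker e := by
      rw [Submodule.span_le]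
      rintro x ⟨i, rfl⟩
      fin_cases i
      · exact memker f hf
      · exact memker h hh
      · exact memker G hG
    have hmono := Submodule.finrank_mono hle
    rw [finrank_span_eq_card hli, hker2] at hmono
    simp at hmono
  obtain ⟨gg, hsum, i0, hgi⟩ := Fintype.not_linearIndependent_iff.mp hdep
  rw [Fin.sum_univ_three] at hsum
  simp only [Matrix.cons_val_zero, Matrix.cons_val_one, Matrix.head_cons,
    Matrix.cons_val_two, Matrix.tail_cons] at hsum
  have comp : ∀ j : Fin 6, gg 0 * toVec f j + gg 1 * toVec h j + gg 2 * toVec G j = 0 := by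
    intro j
    have := congrFun hsum j
    simpa using this
  have c0 := comp 0
  have c1 := comp 1
  have c2 := comp 2
  have c3 := comp 3
  have c4 := comp 4
  have c5 := comp 5
  simp only [toVec_0, toVec_1, toVec_2, toVec_3, toVec_4, toVec_5] at c0 c1 c2 c3 c4 c5
  clear comp hsum hdep memker hsurj hker2 he hpts
  clear e pts
  by_cases hg0 : gg 0 = 0
  · exfalso
    rw [hg0] at c0 c1 c2 c3 c4 c5
    by_cases hg2 : gg 2 = 0
    · have hg1 : gg 1 ≠ 0 := by
        intro h1
        apply hgi
        fin_cases i0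
        · exact hg0
        · exact h1
        · exact hg2
      rw [hg2] at c0 c1 c2 c3 c4 c5
      apply hh0
      refine ⟨?_, ?_, ?_, ?_, ?_, ?_⟩
      · have := mul_eq_zero.mp (by linarith : gg 1 * h.a = 0); tauto
      · have := mul_eq_zero.mp (by linarith : gg 1 * h.b = 0); tauto
      · have := mul_eq_zero.mp (by linarith : gg 1 * h.c = 0); tauto
      · have := mul_eq_zero.mp (by linarith : gg 1 * h.d = 0); tauto
      · have := mul_eq_zero.mp (by linarith : gg 1 * h.e = 0); tauto
      · have := mul_eq_zero.mp (by linarith : gg 1 * h.g = 0); tauto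
    · apply hGh
      refine ⟨-gg 1 / gg 2, ?_, ?_, ?_, ?_, ?_, ?_⟩
      · field_simp; linear_combination c0
      · field_simp; linear_combination c1
      · field_simp; linear_combination c2
      · field_simp; linear_combination c3
      · field_simp; linear_combination c4
      · field_simp; linear_combination c5
  · refine ⟨-gg 1 / gg 0, -gg 2 / gg 0, ?_⟩
    funext j
    simp only [Pi.add_apply, Pi.smul_apply, smul_eq_mul]
    fin_cases j
    · simp only [toVec_0]; change f.a = -gg 1 / gg 0 * h.a + -gg 2 / gg 0 * G.a; field_simp; linear_combination c0
    · simp only [toVec_1]; change f.b = -gg 1 / gg 0 * h.b + -gg 2 / gg 0 * G.b; field_simp; linear_combination c1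
    · simp only [toVec_2, toVec_mk2]; field_simp; linear_combination c2
    · simp only [toVec_3, toVec_mk3]; field_simp; linear_combination c3
    · simp only [toVec_4, toVec_mk4]; field_simp; linear_combination c4
    · simp only [toVec_5, toVec_mk5]; field_simp; linear_combination c5

end CerinAux

set_option maxHeartbeats 2000000 in
/-- **Čerin's generalization of the butterfly theorem.** Let `h` be a conic
through the four base points with center `O` and an axis with direction `u`
(i.e. `B_h(u, u⊥) = 0`), and let `ℓ` be the line through a point `M = O + s·u` of
the axis perpendicular to it. If some other conic through the four base points
meets `ℓ` in exactly two points with midpoint `M`, then every conic through the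
four base points meets `ℓ` either not at all, or exactly at `M`, or exactly in a
pair of distinct points whose midpoint is `M`. -/
theorem cerin_butterfly
    (A B C D : ℝ × ℝ) (hgen : NoThreeCollinear A B C D)
    (h : Conic) (hh0 : h.Nonzero) (hh : h.Through A B C D)
    (O : ℝ × ℝ) (hO : h.IsCenter O)
    (u : ℝ × ℝ) (hu : u ≠ 0)
    (haxis : h.polarForm u (-u.2, u.1) = 0)
    (s : ℝ) (M : ℝ × ℝ) (hM : M = O + s • u)
    (hAl : A ∉ parmLine M (-u.2, u.1)) (hBl : B ∉ parmLine M (-u.2, u.1))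
    (hCl : C ∉ parmLine M (-u.2, u.1)) (hDl : D ∉ parmLine M (-u.2, u.1))
    (G : Conic) (hG0 : G.Nonzero) (hG : G.Through A B C D)
    (hGh : ¬ G.PropTo h)
    (P Q : ℝ × ℝ) (hPQ : P ≠ Q)
    (hGl : {p ∈ parmLine M (-u.2, u.1) | G.eval p = 0} = {P, Q})
    (hmid : M = midpoint ℝ P Q) :
    ∀ f : Conic, f.Nonzero → f.Through A B C D →
      {p ∈ parmLine M (-u.2, u.1) | f.eval p = 0} = ∅ ∨
      {p ∈ parmLine M (-u.2, u.1) | f.eval p = 0} = {M} ∨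
      ∃ X Y : ℝ × ℝ, X ≠ Y ∧ M = midpoint ℝ X Y ∧
        {p ∈ parmLine M (-u.2, u.1) | f.eval p = 0} = {X, Y} := by
  intro f hf0 hf
  set v : ℝ × ℝ := (-u.2, u.1) with hv
  have hv0 : v ≠ 0 := by
    intro h0
    apply hu
    have h1 := congrArg Prod.fst h0
    have h2 := congrArg Prod.snd h0
    simp [hv] at h1 h2
    exact Prod.ext (by simpa using h2) (by simpa using h1)
  -- the axis condition and the center give β_h = 0
  have hOa : 2 * h.a * O.1 + h.b * O.2 + h.d = 0 := by
    have := hO (1, 0)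
    simp only [Conic.eval, Prod.fst_add, Prod.snd_add, Prod.fst_sub, Prod.snd_sub] at this
    norm_num at this
    nlinarith [this]
  have hOb : h.b * O.1 + 2 * h.c * O.2 + h.e = 0 := by
    have := hO (0, 1)
    simp only [Conic.eval, Prod.fst_add, Prod.snd_add, Prod.fst_sub, Prod.snd_sub] at this
    norm_num at this
    nlinarith [this]
  have hM1 : M.1 = O.1 + s * u.1 := by rw [hM]; simp
  have hM2 : M.2 = O.2 + s * u.2 := by rw [hM]; simp
  have hbh : CerinAux.lf h M v = 0 := by
    simp only [CerinAux.lf, hv, hM1, hM2]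
    have hax : h.a * u.1 * (-u.2) + h.b / 2 * (u.1 * u.1 + u.2 * (-u.2)) + h.c * u.2 * u.1 = 0 := by
      simpa [Conic.polarForm, hv] using haxis
    linear_combination (-u.2) * hOa + u.1 * hOb + 2 * s * hax
  -- the symmetric chord for G gives β_G = 0
  have hPm : P ∈ parmLine M v ∧ G.eval P = 0 := by
    have : P ∈ ({P, Q} : Set (ℝ × ℝ)) := by simp
    rw [← hGl] at this
    exact this
  have hQm : Q ∈ parmLine M v ∧ G.eval Q = 0 := by
    have : Q ∈ ({P, Q} : Set (ℝ × ℝ)) := by simp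
    rw [← hGl] at this
    exact this
  obtain ⟨⟨tP, htP⟩, hGP⟩ := hPm
  obtain ⟨⟨tQ, htQ⟩, hGQ⟩ := hQm
  have hsumPQ : P + Q = M + M := by rw [hmid, midpoint_add_self]
  have htsum : tQ = -tP := by
    rw [htP, htQ] at hsumPQ
    have : (tP + tQ) • v = 0 := by
      have := hsumPQ
      abel_nf at this ⊢
      rw [add_smul]
      linear_combination (norm := module) this
    rcases smul_eq_zero.mp this with h0 | h0
    · linarith
    · exact absurd h0 hv0
  have htP0 : tP ≠ 0 := by
    intro h0
    apply hPQ
    rw [htP, htQ, htsum, h0]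
    norm_num
  have hbG : CerinAux.lf G M v = 0 := by
    rw [htP, CerinAux.eval_line] at hGP
    rw [htQ, htsum, CerinAux.eval_line] at hGQ
    have : CerinAux.lf G M v * tP = 0 := by linarith
    rcases mul_eq_zero.mp this with h0 | h0
    · exact h0
    · exact absurd h0 htP0
  -- the pencil gives β_f = 0
  obtain ⟨lam, mu, hpen⟩ := CerinAux.pencil A B C D hgen.1 hgen.2.1 hgen.2.2.1 h G f hh0 hGh hh hG hf
  have ea : f.a = lam * h.a + mu * G.a := by simpa using congrFun hpen 0
  have eb : f.b = lam * h.b + mu * G.b := by simpa using congrFun hpen 1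
  have ec : f.c = lam * h.c + mu * G.c := by simpa using congrFun hpen 2
  have ed : f.d = lam * h.d + mu * G.d := by simpa using congrFun hpen 3
  have ee : f.e = lam * h.e + mu * G.e := by simpa using congrFun hpen 4
  have hbf : CerinAux.lf f M v = 0 := by
    have : CerinAux.lf f M v = lam * CerinAux.lf h M v + mu * CerinAux.lf G M v := by
      simp only [CerinAux.lf, ea, eb, ec, ed, ee]; ring
    rw [this, hbh, hbG]; ring
  -- restriction of f to the line
  set al := CerinAux.qf f v with hal
  set ga := f.eval M with hga
  have hline : ∀ t : ℝ, f.eval (M + t • v) = al * t ^ 2 + ga := by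
    intro t
    rw [CerinAux.eval_line, hbf]
    ring
  by_cases hA0 : al = 0
  · by_cases hG0' : ga = 0
    · -- degenerate case: f would vanish on the whole line, impossible
      exfalso
      set n := u.1 ^ 2 + u.2 ^ 2 with hn
      have hnpos : 0 < n := by
        rcases Prod.ext_iff.not.mp hu with _
        have : u.1 ≠ 0 ∨ u.2 ≠ 0 := by
          by_contra hc
          push_neg at hc
          exact hu (Prod.ext hc.1 hc.2)
        rcases this with h1 | h1 <;> positivity
      have hn0 : n ≠ 0 := ne_of_gt hnpos
      set xc : ℝ × ℝ → ℝ := fun z => ((z.1 - M.1) * u.1 + (z.2 - M.2) * u.2) / n with hxc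
      set yc : ℝ × ℝ → ℝ := fun z => (-(z.1 - M.1) * u.2 + (z.2 - M.2) * u.1) / n with hyc
      have hdec : ∀ z : ℝ × ℝ, z = M + xc z • u + yc z • v := by
        intro z
        apply Prod.ext
        · simp only [hxc, hyc, hv, Prod.fst_add, Prod.smul_fst, smul_eq_mul]
          field_simp
          ring
        · simp only [hxc, hyc, hv, Prod.snd_add, Prod.smul_snd, smul_eq_mul]
          field_simp
          ring
      have hx0 : ∀ z : ℝ × ℝ, z ∉ parmLine M v → xc z ≠ 0 := by
        intro z hz hxz
        apply hz
        refine ⟨yc z, ?_⟩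
        conv_lhs => rw [hdec z]
        rw [hxz]
        simp
      have hplane : ∀ x y : ℝ, f.eval (M + x • u + y • v) =
          x * (CerinAux.qf f u * x + CerinAux.mf f u v * y + CerinAux.lf f M u) := by
        intro x y
        rw [CerinAux.eval_plane, hbf, ← hal, hA0, ← hga, hG0']
        ring
      have hlin : ∀ z : ℝ × ℝ, f.eval z = 0 → z ∉ parmLine M v →
          CerinAux.qf f u * xc z + CerinAux.mf f u v * yc z + CerinAux.lf f M u = 0 := by
        intro z hz hzl
        have h1 : f.eval z = xc z * (CerinAux.qf f u * xc z + CerinAux.mf f u v * yc z +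
            CerinAux.lf f M u) := by
          conv_lhs => rw [hdec z]
          exact hplane _ _
        rw [hz] at h1
        rcases mul_eq_zero.mp h1.symm with h2 | h2
        · exact absurd h2 (hx0 z hzl)
        · exact h2
      have lA := hlin A hf.1 hAl
      have lB := hlin B hf.2.1 hBl
      have lC := hlin C hf.2.2.1 hCl
      set p := CerinAux.qf f u with hp
      set q := CerinAux.mf f u v with hq
      by_cases hpq : p = 0 ∧ q = 0
      · -- f is identically zero: contradiction with nonzero coefficients
        have hl0 : CerinAux.lf f M u = 0 := by
          have := lA
          rw [hpq.1, hpq.2] at this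
          linarith
        have hz : ∀ z : ℝ × ℝ, f.eval z = 0 := by
          intro z
          conv_lhs => rw [hdec z]
          rw [hplane, hpq.1, hpq.2, hl0]
          ring
        apply hf0
        have e00 := hz (0, 0)
        have e10 := hz (1, 0)
        have em0 := hz (-1, 0)
        have e01 := hz (0, 1)
        have e0m := hz (0, -1)
        have e11 := hz (1, 1)
        simp only [Conic.eval] at e00 e10 em0 e01 e0m e11
        norm_num at e00 e10 em0 e01 e0m e11
        refine ⟨by linarith, by linarith, by linarith, by linarith, by linarith, by linarith⟩
      · -- A, B, C are collinear: contradiction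
        apply hgen.1
        have hd2 : p ^ 2 + q ^ 2 ≠ 0 := by
          intro h0
          apply hpq
          constructor <;> nlinarith [sq_nonneg p, sq_nonneg q]
        apply (collinear_iff_of_mem (Set.mem_insert A {B, C})).2
        refine ⟨q • u - p • v, ?_⟩
        intro z hz
        have key : ∀ w : ℝ × ℝ, p * xc w + q * yc w + CerinAux.lf f M u = 0 →
            w = (((xc w - xc A) * q - (yc w - yc A) * p) / (p ^ 2 + q ^ 2)) • (q • u - p • v)
              + A := by
          intro w hw
          set r := ((xc w - xc A) * q - (yc w - yc A) * p) / (p ^ 2 + q ^ 2) with hr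
          have hrel : p * (xc w - xc A) + q * (yc w - yc A) = 0 := by
            have hA' := lA
            linarith
          have hdx : xc w - xc A = r * q := by
            rw [hr, div_mul_eq_mul_div, eq_comm, div_eq_iff hd2]
            linear_combination (-p) * hrel
          have hdy : yc w - yc A = -(r * p) := by
            rw [hr, div_mul_eq_mul_div, ← neg_div, eq_comm, div_eq_iff hd2]
            linear_combination (-q) * hrel
          have h1 : w = M + xc w • u + yc w • v := hdec w
          have h2 : A = M + xc A • u + yc A • v := hdec A
          apply Prod.ext
          · have e1 := congrArg Prod.fst h1
            have e2 := congrArg Prod.fst h2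
            simp only [Prod.fst_add, Prod.smul_fst, Prod.fst_sub, smul_eq_mul] at e1 e2 ⊢
            rw [e1, e2]
            linear_combination u.1 * hdx + v.1 * hdy
          · have e1 := congrArg Prod.snd h1
            have e2 := congrArg Prod.snd h2
            simp only [Prod.snd_add, Prod.smul_snd, Prod.snd_sub, smul_eq_mul] at e1 e2 ⊢
            rw [e1, e2]
            linear_combination u.2 * hdx + v.2 * hdy
        simp only [Set.mem_insert_iff, Set.mem_singleton_iff] at hz
        rcases hz with rfl | rfl | rfl
        · exact ⟨_, key z (by linarith [lA])⟩
        · exact ⟨_, key z (by linarith [lB])⟩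
        · exact ⟨_, key z (by linarith [lC])⟩
    · -- al = 0, ga ≠ 0 : empty intersection
      left
      ext z
      simp only [Set.mem_setOf_eq, Set.mem_empty_iff_false, iff_false]
      rintro ⟨⟨t, rfl⟩, hz⟩
      rw [hline t, hA0] at hz
      apply hG0'
      linarith
  · by_cases hG0' : ga = 0
    · -- only the double root t = 0 : S = {M}
      right; left
      ext z
      simp only [Set.mem_setOf_eq, Set.mem_singleton_iff]
      constructor
      · rintro ⟨⟨t, rfl⟩, hz⟩
        rw [hline t, hG0'] at hz
        have ht : t = 0 := by
          have := mul_eq_zero.mp (by linarith : al * t ^ 2 = 0)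
          rcases this with h0 | h0
          · exact absurd h0 hA0
          · exact pow_eq_zero_iff (by norm_num) |>.mp h0
        rw [ht]
        simp
      · rintro rfl
        refine ⟨⟨0, by simp⟩, ?_⟩
        rw [← hga, hG0']
    · rcases lt_or_gt_of_ne (mul_ne_zero hA0 hG0' : al * ga ≠ 0) with hneg | hpos
      · -- two symmetric roots
        right; right
        have hpos' : 0 < -ga / al := by
          have hlt : ga / al < 0 := by
            rw [div_neg_iff]
            rcases lt_or_gt_of_ne hA0 with h1 | h1
            · exact Or.inl ⟨by nlinarith, h1⟩
            · exact Or.inr ⟨by nlinarith, h1⟩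
          rw [neg_div]
          linarith
        set r := Real.sqrt (-ga / al) with hr
        have hr2 : r ^ 2 = -ga / al := Real.sq_sqrt (le_of_lt hpos')
        have hr0 : 0 < r := Real.sqrt_pos.mpr hpos'
        refine ⟨M + r • v, M - r • v, ?_, ?_, ?_⟩
        · intro hXY
          have : (r + r) • v = 0 := by
            have h1 : (M + r • v) - (M - r • v) = (r + r) • v := by
              rw [add_smul]; abel
            rw [hXY] at h1
            rw [← h1]
            abel
          rcases smul_eq_zero.mp this with h0 | h0
          · linarith
          · exact absurd h0 hv0
        · exact (midpoint_add_sub ℝ M (r • v)).symm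
        · ext z
          simp only [Set.mem_setOf_eq, Set.mem_insert_iff, Set.mem_singleton_iff]
          constructor
          · rintro ⟨⟨t, rfl⟩, hz⟩
            rw [hline t] at hz
            have ht2 : t ^ 2 = r ^ 2 := by
              rw [hr2]
              field_simp
              linarith
            have : (t - r) * (t + r) = 0 := by nlinarith [ht2]
            rcases mul_eq_zero.mp this with h0 | h0
            · left; rw [show t = r by linarith]
            · right
              rw [show t = -r by linarith]
              rw [neg_smul]
              abel_nf
          · intro hz
            rcases hz with rfl | rfl
            · have hralga : al * r ^ 2 = -ga := by
                rw [hr2]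
                field_simp
              refine ⟨⟨r, rfl⟩, ?_⟩
              rw [hline r]
              linarith
            · have hralga : al * r ^ 2 = -ga := by
                rw [hr2]
                field_simp
              refine ⟨⟨-r, by rw [neg_smul]; abel_nf⟩, ?_⟩
              rw [show M - r • v = M + (-r) • v by rw [neg_smul]; abel, hline (-r)]
              have hsq : (-r) ^ 2 = r ^ 2 := by ring
              rw [hsq]
              linarith
      · -- empty intersection
        left
        ext z
        simp only [Set.mem_setOf_eq, Set.mem_empty_iff_false, iff_false]
        rintro ⟨⟨t, rfl⟩, hz⟩
        rw [hline t] at hz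
        have h2 : al * (al * t ^ 2 + ga) = 0 := by rw [hz]; ring
        nlinarith [sq_nonneg (al * t), h2, hpos]
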